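/- Let U and V be nonempty open sets in ℝⁿ and let T : U → V be bijective such that all components of T belong to BC¹(U) and all components of T⁻¹ belong to BC¹(V) (T is 1-smooth). Then inf_U |det T′| > 0 and inf_V |det (T⁻¹)′| > 0. -/

import Mathlib

open MeasureTheory

private lemma aux_det_bound {E : Type*} [NormedAddCommGroup E] [NormedSpace ℝ E]
    [FiniteDimensional ℝ E] (U V : Set E) (hU : IsOpen U) (hV : IsOpen V)
    (hUne : U.Nonempty) (T S : E → E)
    (hTV : Set.MapsTo T U V) (hleft : Set.LeftInvOn S T U)
    (hT : DifferentiableOn ℝ T U) (hS : DifferentiableOn ℝ S V)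
    (MS : ℝ) (hMS : ∀ y ∈ V, ‖fderivWithin ℝ S V y‖ ≤ MS) :
    ∃ c : ℝ, 0 < c ∧ ∀ x ∈ U, c ≤ |(fderivWithin ℝ T U x).det| := by
  -- chain rule : det S'(T x) * det T'(x) = 1 for x ∈ U
  have key : ∀ x ∈ U,
      (fderivWithin ℝ S V (T x)).det * (fderivWithin ℝ T U x).det = 1 := by
    intro x hx
    have hdT : HasFDerivAt T (fderiv ℝ T x) x :=
      (hT.differentiableAt (hU.mem_nhds hx)).hasFDerivAt
    have hdS : HasFDerivAt S (fderiv ℝ S (T x)) (T x) :=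
      (hS.differentiableAt (hV.mem_nhds (hTV hx))).hasFDerivAt
    have hcomp : HasFDerivAt (S ∘ T) ((fderiv ℝ S (T x)).comp (fderiv ℝ T x)) x :=
      hdS.comp x hdT
    have heq : S ∘ T =ᶠ[nhds x] id := by
      filter_upwards [hU.mem_nhds hx] with y hy
      exact hleft hy
    have hid : HasFDerivAt (S ∘ T) (ContinuousLinearMap.id ℝ E) x :=
      (hasFDerivAt_id x).congr_of_eventuallyEq heq
    have huniq : (fderiv ℝ S (T x)).comp (fderiv ℝ T x) = ContinuousLinearMap.id ℝ E :=
      hcomp.unique hid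
    have hdet : ((fderiv ℝ S (T x)).comp (fderiv ℝ T x)).det = 1 := by
      rw [huniq]
      show LinearMap.det _ = _
      rw [ContinuousLinearMap.coe_id, LinearMap.det_id]
    have hdet' : (fderiv ℝ S (T x)).det * (fderiv ℝ T x).det = 1 := by
      rw [← hdet]
      show _ = LinearMap.det _
      exact (LinearMap.det_comp (fderiv ℝ S (T x) : E →ₗ[ℝ] E) (fderiv ℝ T x)).symm
    rw [fderivWithin_of_isOpen hU hx, fderivWithin_of_isOpen hV (hTV hx)]
    exact hdet'
  -- bound |det| on the closed ball of radius MS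
  obtain ⟨x₀, hx₀⟩ := hUne
  have hMS0 : (0:ℝ) ≤ MS := le_trans (norm_nonneg _) (hMS _ (hTV hx₀))
  have hK : IsCompact (Metric.closedBall (0 : E →L[ℝ] E) MS) := isCompact_closedBall _ _
  have hKne : (Metric.closedBall (0 : E →L[ℝ] E) MS).Nonempty :=
    ⟨0, Metric.mem_closedBall_self hMS0⟩
  obtain ⟨A₀, -, hA₀⟩ := hK.exists_isMaxOn hKne
    ((ContinuousLinearMap.continuous_det).abs.continuousOn)
  set C := |A₀.det| with hC
  have hbound : ∀ y ∈ V, |(fderivWithin ℝ S V y).det| ≤ C := by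
    intro y hy
    exact hA₀ (by simpa [Metric.mem_closedBall, dist_zero_right] using hMS y hy)
  have hCpos : 0 < C := by
    have h1 := key x₀ hx₀
    have hne : (fderivWithin ℝ S V (T x₀)).det ≠ 0 := by
      intro h; rw [h, zero_mul] at h1; exact one_ne_zero h1.symm
    exact lt_of_lt_of_le (abs_pos.mpr hne) (hbound _ (hTV hx₀))
  refine ⟨C⁻¹, inv_pos.mpr hCpos, fun x hx => ?_⟩
  have h1 := key x hx
  have habs : |(fderivWithin ℝ S V (T x)).det| * |(fderivWithin ℝ T U x).det| = 1 := by
    rw [← abs_mul, h1, abs_one]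
  have hSpos : 0 < |(fderivWithin ℝ S V (T x)).det| := by
    by_contra h
    push_neg at h
    have : |(fderivWithin ℝ S V (T x)).det| = 0 := le_antisymm h (abs_nonneg _)
    rw [this, zero_mul] at habs; exact one_ne_zero habs.symm
  have : |(fderivWithin ℝ T U x).det| = |(fderivWithin ℝ S V (T x)).det|⁻¹ :=
    eq_inv_of_mul_eq_one_left (by rw [mul_comm] at habs; exact habs)
  rw [this]
  exact inv_anti₀ hSpos (hbound _ (hTV hx))

/-- Let `U, V ⊆ ℝⁿ` be nonempty open sets and `T : U → V` bijective and
`1`-smooth (both `T` and `T⁻¹` are `C¹` with bounded first derivatives).  Then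
`inf_U |det T′| > 0` and `inf_V |det (T⁻¹)′| > 0`. -/
theorem stmt_10 (n : ℕ) (U V : Set (EuclideanSpace ℝ (Fin n)))
    (hU : IsOpen U) (hUne : U.Nonempty) (hV : IsOpen V) (hVne : V.Nonempty)
    (T S : EuclideanSpace ℝ (Fin n) → EuclideanSpace ℝ (Fin n))
    (hbij : Set.BijOn T U V) (hinv : Set.InvOn S T U V)
    (hT : ContDiffOn ℝ 1 T U) (hS : ContDiffOn ℝ 1 S V)
    (MT : ℝ) (hMT : ∀ x ∈ U, ‖fderivWithin ℝ T U x‖ ≤ MT)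
    (MS : ℝ) (hMS : ∀ y ∈ V, ‖fderivWithin ℝ S V y‖ ≤ MS) :
    (∃ c : ℝ, 0 < c ∧ ∀ x ∈ U, c ≤ |(fderivWithin ℝ T U x).det|) ∧
    (∃ c : ℝ, 0 < c ∧ ∀ y ∈ V, c ≤ |(fderivWithin ℝ S V y).det|) := by
  have hSU : Set.MapsTo S V U := by
    intro y hy
    obtain ⟨x, hx, rfl⟩ := hbij.surjOn hy
    rw [hinv.1 hx]
    exact hx
  constructor
  · exact aux_det_bound U V hU hV hUne T S hbij.mapsTo hinv.1
      (hT.differentiableOn one_ne_zero) (hS.differentiableOn one_ne_zero) MS hMS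
  · exact aux_det_bound V U hV hU hVne S T hSU hinv.2
      (hS.differentiableOn one_ne_zero) (hT.differentiableOn one_ne_zero) MT hMT
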